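/- Let p be a prime, K = F_{p^p} = F_p(x) with x^p = x + 1, and k = F_p. Then the k-subspace V of K spanned by all elements x^u(x+i)^v - x^v(x-i)^u with 0 ≤ u,v,i ≤ p-1 satisfies: x^h ∈ V for all 0 ≤ h ≤ p-2, while x^{p-1} ∉ V; in particular V is a proper subspace of K of codimension 1. -/

import Mathlib

open Module Finset

section Aux

variable {p : ℕ} [Fact p.Prime]

private lemma zmod_sum_range {M : Type*} [AddCommMonoid M] (f : ZMod p → M) :
    ∑ j ∈ Finset.range p, f ((j : ℕ) : ZMod p) = ∑ a : ZMod p, f a := by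
  haveI : NeZero p := ⟨(Fact.out : p.Prime).ne_zero⟩
  refine Finset.sum_nbij' (fun j => ((j : ℕ) : ZMod p)) (fun a => a.val)
    (fun a _ => Finset.mem_univ _) (fun a _ => Finset.mem_range.2 (ZMod.val_lt a))
    (fun j hj => ZMod.val_cast_of_lt (Finset.mem_range.1 hj))
    (fun a _ => ZMod.natCast_rightInverse a) (fun j _ => rfl)

private lemma zmod_choose (k : ℕ) (hk : k ≤ p - 1) :
    (((p - 1).choose k : ℕ) : ZMod p) = (-1) ^ k := by
  have hp : p.Prime := Fact.out
  have hp2 : 2 ≤ p := hp.two_le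
  induction k with
  | zero => simp
  | succ n ih =>
    have hn : n ≤ p - 1 := by omega
    have h0 : ((p.choose (n + 1) : ℕ) : ZMod p) = 0 :=
      (ZMod.natCast_eq_zero_iff _ _).2
        (hp.dvd_choose_self (Nat.succ_ne_zero n) (by omega))
    have hsplit : p.choose (n + 1) = (p - 1).choose n + (p - 1).choose (n + 1) := by
      have hps : p = (p - 1) + 1 := by omega
      conv_lhs => rw [hps]
      exact Nat.choose_succ_succ _ _
    rw [hsplit] at h0
    push_cast at h0
    rw [ih hn] at h0
    have : (((p - 1).choose (n + 1) : ℕ) : ZMod p) = -(-1) ^ n := by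
      linear_combination h0
    rw [this, pow_succ]
    ring

private lemma zmod_sum_pow_top : ∑ a : ZMod p, a ^ (p - 1) = -1 := by
  have hp : p.Prime := Fact.out
  have hp2 : 2 ≤ p := hp.two_le
  haveI : NeZero p := ⟨hp.ne_zero⟩
  have h : ∀ a ∈ Finset.univ.erase (0 : ZMod p), a ^ (p - 1) = 1 := fun a ha =>
    ZMod.pow_card_sub_one_eq_one (Finset.ne_of_mem_erase ha)
  rw [← Finset.add_sum_erase _ _ (Finset.mem_univ (0 : ZMod p)),
    Finset.sum_congr rfl h, Finset.sum_const, zero_pow (by omega : p - 1 ≠ 0),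
    Finset.card_erase_of_mem (Finset.mem_univ _), Finset.card_univ, ZMod.card,
    nsmul_eq_mul, mul_one, zero_add, Nat.cast_sub (by omega : 1 ≤ p),
    ZMod.natCast_self, Nat.cast_one, zero_sub]

private lemma zmod_sum_pow (e : ℕ) (h1 : e ≤ 2 * p - 3) (h2 : e ≠ p - 1) :
    ∑ a : ZMod p, a ^ e = 0 := by
  have hp : p.Prime := Fact.out
  have hp2 : 2 ≤ p := hp.two_le
  rcases lt_or_gt_of_ne h2 with h | h
  · have := FiniteField.sum_pow_lt_card_sub_one (K := ZMod p) e
      (by rw [ZMod.card]; exact h)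
    exact this
  · set r := e - (p - 1) with hr
    have hr1 : 1 ≤ r := by omega
    have hr2 : r < p - 1 := by omega
    have hterm : ∀ a : ZMod p, a ^ e = a ^ r := by
      intro a
      by_cases ha : a = 0
      · rw [ha, zero_pow (by omega : e ≠ 0), zero_pow (by omega : r ≠ 0)]
      · have : e = r + (p - 1) := by omega
        rw [this, pow_add, ZMod.pow_card_sub_one_eq_one ha, mul_one]
    rw [Finset.sum_congr rfl fun a _ => hterm a]
    have := FiniteField.sum_pow_lt_card_sub_one (K := ZMod p) r
      (by rw [ZMod.card]; exact hr2)
    exact this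

end Aux

set_option maxHeartbeats 1000000 in
/-- Let K = F_p(x) with x^p = x + 1 (so K = F_{p^p}), and let V be the F_p-span of
the elements x^u (x+i)^v - x^v (x-i)^u, 0 ≤ u,v,i ≤ p-1. Then x^h ∈ V for all
h ≤ p-2, while x^{p-1} ∉ V; so V has codimension 1 in K. -/
theorem artinSchreier_commutator_span (p : ℕ) [Fact p.Prime] (K : Type*) [Field K]
    [Algebra (ZMod p) K] (x : K) (hx : x ^ p = x + 1)
    (hdim : Module.finrank (ZMod p) K = p) :
    (∀ h ≤ p - 2, x ^ h ∈ Submodule.span (ZMod p) {w : K | ∃ u v i : ℕ,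
      u ≤ p - 1 ∧ v ≤ p - 1 ∧ i ≤ p - 1 ∧
      w = x ^ u * (x + (i : K)) ^ v - x ^ v * (x - (i : K)) ^ u}) ∧
    x ^ (p - 1) ∉ Submodule.span (ZMod p) {w : K | ∃ u v i : ℕ,
      u ≤ p - 1 ∧ v ≤ p - 1 ∧ i ≤ p - 1 ∧
      w = x ^ u * (x + (i : K)) ^ v - x ^ v * (x - (i : K)) ^ u} ∧
    Module.finrank (ZMod p) (Submodule.span (ZMod p) {w : K | ∃ u v i : ℕ,
      u ≤ p - 1 ∧ v ≤ p - 1 ∧ i ≤ p - 1 ∧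
      w = x ^ u * (x + (i : K)) ^ v - x ^ v * (x - (i : K)) ^ u}) = p - 1 := by
  have hp : p.Prime := Fact.out
  have hp2 : 2 ≤ p := hp.two_le
  haveI : NeZero p := ⟨hp.ne_zero⟩
  have hinj : Function.Injective (algebraMap (ZMod p) K) :=
    (algebraMap (ZMod p) K).injective
  haveI hchar : CharP K p := charP_of_injective_algebraMap hinj p
  haveI : Module.Finite (ZMod p) K :=
    Module.finite_of_finrank_pos (by rw [hdim]; exact hp.pos)
  set S : Set K := {w : K | ∃ u v i : ℕ, u ≤ p - 1 ∧ v ≤ p - 1 ∧ i ≤ p - 1 ∧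
      w = x ^ u * (x + (i : K)) ^ v - x ^ v * (x - (i : K)) ^ u} with hSdef
  -- basic facts about the algebra map
  have zfix : ∀ c : ZMod p, (algebraMap (ZMod p) K c) ^ p = algebraMap (ZMod p) K c := by
    intro c; rw [← map_pow, ZMod.pow_card]
  have znat : ∀ j : ℕ, ((j : K)) = algebraMap (ZMod p) K ((j : ℕ) : ZMod p) :=
    fun j => (map_natCast (algebraMap (ZMod p) K) j).symm
  -- the key character-sum computation
  have key : ∀ m : ℕ, m ≤ p - 2 →
      ∑ a : ZMod p, algebraMap (ZMod p) K (a ^ m) * (x + algebraMap (ZMod p) K a) ^ (p - 1)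
        = (-1) ^ (m + 1) * x ^ m := by
    intro m hm
    have expand : ∀ a : ZMod p,
        algebraMap (ZMod p) K (a ^ m) * (x + algebraMap (ZMod p) K a) ^ (p - 1)
          = ∑ k ∈ Finset.range (p - 1 + 1), ((p - 1).choose k : K) *
              (algebraMap (ZMod p) K (a ^ (m + (p - 1 - k))) * x ^ k) := by
      intro a
      rw [add_pow, Finset.mul_sum]
      refine Finset.sum_congr rfl fun k _ => ?_
      simp only [map_mul, map_pow, pow_add]
      ring
    calc ∑ a : ZMod p, algebraMap (ZMod p) K (a ^ m) *
            (x + algebraMap (ZMod p) K a) ^ (p - 1)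
        = ∑ a : ZMod p, ∑ k ∈ Finset.range (p - 1 + 1), ((p - 1).choose k : K) *
            (algebraMap (ZMod p) K (a ^ (m + (p - 1 - k))) * x ^ k) :=
          Finset.sum_congr rfl fun a _ => expand a
      _ = ∑ k ∈ Finset.range (p - 1 + 1), ((p - 1).choose k : K) *
            (algebraMap (ZMod p) K (∑ a : ZMod p, a ^ (m + (p - 1 - k))) * x ^ k) := by
          rw [Finset.sum_comm]
          refine Finset.sum_congr rfl fun k _ => ?_
          rw [map_sum, Finset.sum_mul, Finset.mul_sum]
      _ = (-1) ^ (m + 1) * x ^ m := by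
          rw [Finset.sum_eq_single m]
          · have he : m + (p - 1 - m) = p - 1 := by omega
            rw [he, zmod_sum_pow_top]
            have hcm : (((p - 1).choose m : ℕ) : K) = (-1) ^ m := by
              rw [znat ((p - 1).choose m), zmod_choose m (by omega)]
              rw [map_pow, map_neg, map_one]
            rw [hcm, map_neg, map_one, pow_succ]
            ring
          · intro k hk hkm
            have hk' : k ≤ p - 1 := by
              have := Finset.mem_range.1 hk; omega
            rw [zmod_sum_pow (m + (p - 1 - k)) (by omega) (by omega), map_zero]
            ring
          · intro hm'
            exact absurd (Finset.mem_range.2 (by omega)) hm'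
  -- the generators with u = 0, v = p-1
  have hgen : ∀ a : ZMod p,
      (x + algebraMap (ZMod p) K a) ^ (p - 1) - x ^ (p - 1) ∈ S := by
    intro a
    refine ⟨0, p - 1, a.val, by omega, le_refl _, by
      have := ZMod.val_lt a; omega, ?_⟩
    have hv : ((a.val : ℕ) : K) = algebraMap (ZMod p) K a := by
      rw [znat a.val, ZMod.natCast_rightInverse a]
    rw [pow_zero, one_mul, pow_zero, mul_one, hv]
  -- Part 1
  have part1 : ∀ h ≤ p - 2, x ^ h ∈ Submodule.span (ZMod p) S := by
    intro h hh
    have hsum : ∑ a : ZMod p, ((-1 : ZMod p) ^ (h + 1) * a ^ h) •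
        ((x + algebraMap (ZMod p) K a) ^ (p - 1) - x ^ (p - 1)) = x ^ h := by
      calc ∑ a : ZMod p, ((-1 : ZMod p) ^ (h + 1) * a ^ h) •
              ((x + algebraMap (ZMod p) K a) ^ (p - 1) - x ^ (p - 1))
          = ∑ a : ZMod p, ((-1 : K) ^ (h + 1) *
              (algebraMap (ZMod p) K (a ^ h) * (x + algebraMap (ZMod p) K a) ^ (p - 1)) -
              (-1 : K) ^ (h + 1) * (algebraMap (ZMod p) K (a ^ h) * x ^ (p - 1))) := by
            refine Finset.sum_congr rfl fun a _ => ?_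
            rw [Algebra.smul_def, map_mul, map_pow, map_neg, map_one]
            ring
        _ = (-1 : K) ^ (h + 1) * (∑ a : ZMod p,
              algebraMap (ZMod p) K (a ^ h) * (x + algebraMap (ZMod p) K a) ^ (p - 1)) -
            (-1 : K) ^ (h + 1) *
              (algebraMap (ZMod p) K (∑ a : ZMod p, a ^ h) * x ^ (p - 1)) := by
            rw [Finset.sum_sub_distrib]
            congr 1
            · rw [Finset.mul_sum]
            · rw [map_sum, Finset.sum_mul, Finset.mul_sum]
        _ = x ^ h := by
            rw [key h hh, zmod_sum_pow h (by omega) (by omega), map_zero, zero_mul,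
              mul_zero, sub_zero, ← mul_assoc, ← mul_pow, neg_mul_neg, one_mul,
              one_pow, one_mul]
    rw [← hsum]
    exact Submodule.sum_mem _ fun a _ =>
      Submodule.smul_mem _ _ (Submodule.subset_span (hgen a))
  -- Frobenius orbit of x
  have hfrob : ∀ j : ℕ, x ^ p ^ j = x + (j : K) := by
    intro j
    induction j with
    | zero => simp
    | succ n ih =>
      have hnp : ((n : K)) ^ p = (n : K) := by rw [znat n, zfix]
      rw [pow_succ, pow_mul, ih, add_pow_char, hx, hnp]
      push_cast
      ring
  -- the trace-like linear map
  let T : K →ₗ[ZMod p] K :=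
    { toFun := fun y => ∑ j ∈ Finset.range p, y ^ p ^ j
      map_add' := fun a b => by
        rw [← Finset.sum_add_distrib]
        exact Finset.sum_congr rfl fun j _ => add_pow_char_pow a b p j
      map_smul' := fun c y => by
        simp only [RingHom.id_apply]
        rw [Algebra.smul_def, Algebra.smul_def, Finset.mul_sum]
        refine Finset.sum_congr rfl fun j _ => ?_
        rw [mul_pow, ← map_pow, ZMod.pow_card_pow] }
  have hTapply : ∀ y : K, T y = ∑ j ∈ Finset.range p, y ^ p ^ j := fun y => rfl
  -- the span is contained in the kernel of T
  have hker : Submodule.span (ZMod p) S ≤ LinearMap.ker T := by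
    rw [Submodule.span_le]
    rintro w ⟨u, v, i, hu, hv, hi, rfl⟩
    simp only [SetLike.mem_coe, LinearMap.mem_ker]
    rw [hTapply]
    set i' : ZMod p := ((i : ℕ) : ZMod p) with hi'
    have hterm : ∀ j : ℕ,
        (x ^ u * (x + (i : K)) ^ v - x ^ v * (x - (i : K)) ^ u) ^ p ^ j
          = (x + algebraMap (ZMod p) K ((j : ℕ) : ZMod p)) ^ u *
              (x + algebraMap (ZMod p) K (((j : ℕ) : ZMod p) + i')) ^ v -
            (x + algebraMap (ZMod p) K ((j : ℕ) : ZMod p)) ^ v *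
              (x + algebraMap (ZMod p) K (((j : ℕ) : ZMod p) - i')) ^ u := by
      intro j
      have hikj : ((i : K)) ^ p ^ j = (i : K) := by
        rw [znat i, ← map_pow, ZMod.pow_card_pow]
      rw [sub_pow_char_pow, mul_pow, mul_pow, pow_right_comm x u (p ^ j),
        pow_right_comm x v (p ^ j), pow_right_comm (x + (i : K)) v (p ^ j),
        pow_right_comm (x - (i : K)) u (p ^ j), add_pow_char_pow, sub_pow_char_pow,
        hikj, hfrob j]
      rw [map_add, map_sub, ← znat i, ← znat j]
      ring_nf
    calc ∑ j ∈ Finset.range p,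
            (x ^ u * (x + (i : K)) ^ v - x ^ v * (x - (i : K)) ^ u) ^ p ^ j
        = ∑ j ∈ Finset.range p,
            ((x + algebraMap (ZMod p) K ((j : ℕ) : ZMod p)) ^ u *
              (x + algebraMap (ZMod p) K (((j : ℕ) : ZMod p) + i')) ^ v -
            (x + algebraMap (ZMod p) K ((j : ℕ) : ZMod p)) ^ v *
              (x + algebraMap (ZMod p) K (((j : ℕ) : ZMod p) - i')) ^ u) :=
          Finset.sum_congr rfl fun j _ => hterm j
      _ = ∑ a : ZMod p,
            ((x + algebraMap (ZMod p) K a) ^ u *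
              (x + algebraMap (ZMod p) K (a + i')) ^ v -
            (x + algebraMap (ZMod p) K a) ^ v *
              (x + algebraMap (ZMod p) K (a - i')) ^ u) :=
          zmod_sum_range (fun a => (x + algebraMap (ZMod p) K a) ^ u *
              (x + algebraMap (ZMod p) K (a + i')) ^ v -
            (x + algebraMap (ZMod p) K a) ^ v *
              (x + algebraMap (ZMod p) K (a - i')) ^ u)
      _ = 0 := by
          rw [Finset.sum_sub_distrib]
          have hre : (∑ a : ZMod p, (x + algebraMap (ZMod p) K a) ^ u *
                (x + algebraMap (ZMod p) K (a + i')) ^ v)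
              = ∑ a : ZMod p, (x + algebraMap (ZMod p) K a) ^ v *
                (x + algebraMap (ZMod p) K (a - i')) ^ u := by
            refine Fintype.sum_equiv (Equiv.addRight i') _ _ fun b => ?_
            simp only [Equiv.coe_addRight, add_sub_cancel_right]
            ring
          rw [hre, sub_self]
  -- T (x^(p-1)) = -1
  have hT : T (x ^ (p - 1)) = -1 := by
    rw [hTapply]
    calc ∑ j ∈ Finset.range p, (x ^ (p - 1)) ^ p ^ j
        = ∑ j ∈ Finset.range p,
            (x + algebraMap (ZMod p) K ((j : ℕ) : ZMod p)) ^ (p - 1) := by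
          refine Finset.sum_congr rfl fun j _ => ?_
          rw [pow_right_comm, hfrob j, znat j]
      _ = ∑ a : ZMod p, (x + algebraMap (ZMod p) K a) ^ (p - 1) :=
          zmod_sum_range (fun a => (x + algebraMap (ZMod p) K a) ^ (p - 1))
      _ = -1 := by
          have hk := key 0 (by omega)
          simp only [pow_zero, map_one, one_mul, pow_one] at hk
          rw [hk]
          ring
  -- Part 2
  have part2 : x ^ (p - 1) ∉ Submodule.span (ZMod p) S := by
    intro hmem
    have h0 : T (x ^ (p - 1)) = 0 := LinearMap.mem_ker.1 (hker hmem)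
    rw [hT] at h0
    exact one_ne_zero (by linear_combination -h0 : (1 : K) = 0)
  -- Part 3
  have hVne : Submodule.span (ZMod p) S ≠ ⊤ := by
    intro htop
    exact part2 (htop ▸ Submodule.mem_top)
  have hupper : finrank (ZMod p) (Submodule.span (ZMod p) S) < p := by
    have h := Submodule.finrank_lt hVne
    rw [hdim] at h
    exact h
  have hint : IsIntegral (ZMod p) x := IsIntegral.of_finite (ZMod p) x
  have hdvd : (minpoly (ZMod p) x).natDegree ∣ p := by
    have h := minpoly.degree_dvd hint
    rw [hdim] at h
    exact h
  have hne1 : (minpoly (ZMod p) x).natDegree ≠ 1 := by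
    intro h1
    obtain ⟨c, hc⟩ := minpoly.natDegree_eq_one_iff.mp h1
    have hxp : x ^ p = x := by rw [← hc, zfix]
    rw [hx] at hxp
    exact one_ne_zero (by linear_combination hxp : (1 : K) = 0)
  have hdeg : (minpoly (ZMod p) x).natDegree = p :=
    ((hp.eq_one_or_self_of_dvd _ hdvd).resolve_left hne1)
  have hli : LinearIndependent (ZMod p) fun i : Fin p => x ^ (i : ℕ) := by
    have h := linearIndependent_pow (K := ZMod p) x
    rw [hdeg] at h
    exact h
  have hmemV : ∀ i : Fin (p - 1), x ^ (i : ℕ) ∈ Submodule.span (ZMod p) S := by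
    intro i
    exact part1 i (by have := i.isLt; omega)
  have hlif : LinearIndependent (ZMod p)
      (fun i : Fin (p - 1) => (⟨x ^ (i : ℕ), hmemV i⟩ : Submodule.span (ZMod p) S)) := by
    have hcomp := hli.comp (Fin.castLE (by omega : p - 1 ≤ p))
      (Fin.castLE_injective _)
    refine LinearIndependent.of_comp (Submodule.span (ZMod p) S).subtype ?_
    exact hcomp
  have hlower : p - 1 ≤ finrank (ZMod p) (Submodule.span (ZMod p) S) := by
    have := hlif.fintype_card_le_finrank
    simpa using this
  exact ⟨part1, part2, by omega⟩
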